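/- Let Γ be a group such that the centralizer of any nontrivial normal subgroup of Γ is trivial. If Γ embeds into GL(n,R) for some commutative ring R, then Γ embeds into GL(n,K) for some field K. -/

import Mathlib

open Matrix

/-- Let `Γ` be a group in which the centralizer of any nontrivial normal
subgroup is trivial.  If `Γ` embeds into `GL(n, R)` for some commutative ring
`R`, then `Γ` embeds into `GL(n, K)` for some field `K`. -/
theorem stmt_8 {Γ : Type*} [Group Γ] (n : ℕ)
    (hcent : ∀ N : Subgroup Γ, N.Normal → N ≠ ⊥ →
      Subgroup.centralizer (N : Set Γ) = ⊥)
    (hlin : ∃ (R : Type) (_ : CommRing R) (φ : Γ →* GL (Fin n) R),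
      Function.Injective φ) :
    ∃ (K : Type) (_ : Field K) (ψ : Γ →* GL (Fin n) K),
      Function.Injective ψ := by
  classical
  obtain ⟨R, _, φ, hφ⟩ := hlin
  by_cases hsub : Subsingleton Γ
  · exact ⟨ℚ, inferInstance, 1, fun a b _ => Subsingleton.elim a b⟩
  have hnt : Nontrivial Γ := not_subsingleton_iff_nontrivial.mp hsub
  -- the injectivity property of an ideal
  set Q : Ideal R → Prop := fun I => ∀ g : Γ,
      (∀ i j, (φ g : Matrix (Fin n) (Fin n) R) i j - (1 : Matrix (Fin n) (Fin n) R) i j ∈ I)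
      → g = 1 with hQdef
  have hQ0 : Q ⊥ := by
    intro g hg
    apply hφ
    rw [_root_.map_one]
    refine Units.ext (Matrix.ext fun i j => ?_)
    have := hg i j
    rwa [Ideal.mem_bot, sub_eq_zero] at this
  have hchains : ∀ c ⊆ {I | Q I}, IsChain (· ≤ ·) c → ∀ y ∈ c,
      ∃ ub ∈ {I | Q I}, ∀ z ∈ c, z ≤ ub := by
    intro c hc hchain y hy
    refine ⟨sSup c, ?_, fun z hz => le_sSup hz⟩
    intro g hg
    have hdir : DirectedOn (· ≤ ·) c := hchain.directedOn
    have hmem : ∀ p : Fin n × Fin n, ∃ J ∈ c,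
        (φ g : Matrix (Fin n) (Fin n) R) p.1 p.2 - (1 : Matrix (Fin n) (Fin n) R) p.1 p.2 ∈ J := by
      intro p
      have := hg p.1 p.2
      rwa [Submodule.mem_sSup_of_directed ⟨y, hy⟩ hdir] at this
    choose J hJc hJmem using hmem
    haveI : Nonempty ↥c := ⟨⟨y, hy⟩⟩
    have hdir' : Directed (· ≤ ·) (Subtype.val : ↥c → Ideal R) :=
      directedOn_iff_directed.mp hdir
    obtain ⟨z, hz⟩ := hdir'.finset_le (Finset.univ.image fun p => (⟨J p, hJc p⟩ : ↥c))
    refine hc z.2 g fun i j => ?_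
    exact hz ⟨J (i, j), hJc (i, j)⟩ (Finset.mem_image_of_mem _ (Finset.mem_univ (i, j)))
      (hJmem (i, j))
  obtain ⟨I, -, hImax⟩ := zorn_le_nonempty₀ {I | Q I} hchains ⊥ hQ0
  have hQI : Q I := hImax.1
  -- membership in kernels mod an ideal
  have hker : ∀ (J : Ideal R) (g : Γ),
      Matrix.GeneralLinearGroup.map (Ideal.Quotient.mk J) (φ g) = 1 ↔
      ∀ i j, (φ g : Matrix (Fin n) (Fin n) R) i j - (1 : Matrix (Fin n) (Fin n) R) i j ∈ J := by
    intro J g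
    rw [Units.ext_iff, ← Matrix.ext_iff]
    refine forall₂_congr fun i j => ?_
    have h1 : ((Matrix.GeneralLinearGroup.map (Ideal.Quotient.mk J) (φ g) : GL (Fin n) (R ⧸ J))
        : Matrix (Fin n) (Fin n) (R ⧸ J)) i j
        = Ideal.Quotient.mk J ((φ g : Matrix (Fin n) (Fin n) R) i j) := rfl
    have h2 : ((1 : GL (Fin n) (R ⧸ J)) : Matrix (Fin n) (Fin n) (R ⧸ J)) i j
        = Ideal.Quotient.mk J ((1 : Matrix (Fin n) (Fin n) R) i j) := by
      by_cases h : i = j <;> simp [Matrix.one_apply, h]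
    rw [h1, h2, Ideal.Quotient.eq]
  -- I is prime
  have hIne : I ≠ ⊤ := by
    intro h
    obtain ⟨g, hg⟩ := exists_ne (1 : Γ)
    exact hg (hQI g fun i j => h ▸ Submodule.mem_top)
  have hprime : I.IsPrime := by
    refine ⟨hIne, ?_⟩
    intro a b hab
    by_contra hcon
    push_neg at hcon
    obtain ⟨ha, hb⟩ := hcon
    -- the two enlarged ideals
    set Ia := I ⊔ Ideal.span {a} with hIa
    set Ib := I ⊔ Ideal.span {b} with hIb
    have hmul : ∀ u ∈ Ia, ∀ v ∈ Ib, u * v ∈ I := by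
      have : Ia * Ib ≤ I := by
        rw [hIa, hIb, Ideal.sup_mul, Ideal.mul_sup, Ideal.mul_sup]
        refine sup_le (sup_le Ideal.mul_le_right Ideal.mul_le_left)
          (sup_le Ideal.mul_le_right ?_)
        rw [Ideal.span_singleton_mul_span_singleton, Ideal.span_singleton_le_iff_mem]
        exact hab
      exact fun u hu v hv => this (Ideal.mul_mem_mul hu hv)
    -- nontrivial kernels
    have hnotQ : ∀ (x : R), x ∉ I → ¬ Q (I ⊔ Ideal.span {x}) := by
      intro x hx hQx
      exact hx (hImax.2 hQx le_sup_left (Ideal.mem_sup_right (Ideal.mem_span_singleton_self x)))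
    set Na : Subgroup Γ :=
      ((Matrix.GeneralLinearGroup.map (Ideal.Quotient.mk Ia)).comp φ).ker with hNa
    set Nb : Subgroup Γ :=
      ((Matrix.GeneralLinearGroup.map (Ideal.Quotient.mk Ib)).comp φ).ker with hNb
    have hNamem : ∀ g : Γ, g ∈ Na ↔
        ∀ i j, (φ g : Matrix (Fin n) (Fin n) R) i j - (1 : Matrix (Fin n) (Fin n) R) i j ∈ Ia :=
      fun g => by rw [hNa, MonoidHom.mem_ker, MonoidHom.comp_apply, hker]
    have hNbmem : ∀ g : Γ, g ∈ Nb ↔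
        ∀ i j, (φ g : Matrix (Fin n) (Fin n) R) i j - (1 : Matrix (Fin n) (Fin n) R) i j ∈ Ib :=
      fun g => by rw [hNb, MonoidHom.mem_ker, MonoidHom.comp_apply, hker]
    have hNane : Na ≠ ⊥ := by
      obtain ⟨g, hg1, hg2⟩ : ∃ g : Γ, ¬ (g = 1) ∧
          ∀ i j, (φ g : Matrix (Fin n) (Fin n) R) i j - (1 : Matrix (Fin n) (Fin n) R) i j ∈ Ia := by
        have h2 : ¬ ∀ g : Γ, (∀ i j, (φ g : Matrix (Fin n) (Fin n) R) i j
            - (1 : Matrix (Fin n) (Fin n) R) i j ∈ Ia) → g = 1 := hnotQ a ha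
        push_neg at h2
        obtain ⟨g, hg, hg1⟩ := h2
        exact ⟨g, hg1, hg⟩
      intro h
      rw [Subgroup.eq_bot_iff_forall] at h
      exact hg1 (h g ((hNamem g).mpr hg2))
    have hNbne : Nb ≠ ⊥ := by
      obtain ⟨g, hg1, hg2⟩ : ∃ g : Γ, ¬ (g = 1) ∧
          ∀ i j, (φ g : Matrix (Fin n) (Fin n) R) i j - (1 : Matrix (Fin n) (Fin n) R) i j ∈ Ib := by
        have h2 : ¬ ∀ g : Γ, (∀ i j, (φ g : Matrix (Fin n) (Fin n) R) i j
            - (1 : Matrix (Fin n) (Fin n) R) i j ∈ Ib) → g = 1 := hnotQ b hb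
        push_neg at h2
        obtain ⟨g, hg, hg1⟩ := h2
        exact ⟨g, hg1, hg⟩
      intro h
      rw [Subgroup.eq_bot_iff_forall] at h
      exact hg1 (h g ((hNbmem g).mpr hg2))
    -- elements of Na and Nb commute
    have hcomm : ∀ x ∈ Na, ∀ y ∈ Nb, x * y = y * x := by
      intro x hx y hy
      rw [← mul_inv_eq_one]
      apply hQI
      intro i j
      have hA := (hNamem x).mp hx
      have hB := (hNbmem y).mp hy
      set A : Matrix (Fin n) (Fin n) R :=
        (φ x : Matrix (Fin n) (Fin n) R) - 1 with hAdef
      set B : Matrix (Fin n) (Fin n) R :=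
        (φ y : Matrix (Fin n) (Fin n) R) - 1 with hBdef
      have hCD : (φ (x * y) : Matrix (Fin n) (Fin n) R) - (φ (y * x) : Matrix (Fin n) (Fin n) R)
          = A * B - B * A := by
        rw [_root_.map_mul, _root_.map_mul, Units.val_mul, Units.val_mul, hAdef, hBdef]
        noncomm_ring
      have hCDmem : ∀ i j, ((φ (x * y) : Matrix (Fin n) (Fin n) R)
          - (φ (y * x) : Matrix (Fin n) (Fin n) R)) i j ∈ I := by
        intro i j
        rw [hCD]
        refine Ideal.sub_mem _ ?_ ?_
        · rw [Matrix.mul_apply]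
          exact Ideal.sum_mem _ fun k _ => hmul _ (hA i k) _ (hB k j)
        · rw [Matrix.mul_apply]
          exact Ideal.sum_mem _ fun k _ => mul_comm (A k j) (B i k) ▸
            hmul _ (hA k j) _ (hB i k)
      -- now multiply by the inverse
      have key : (φ (x * y * (y * x)⁻¹) : Matrix (Fin n) (Fin n) R)
          - (1 : Matrix (Fin n) (Fin n) R)
          = ((φ (x * y) : Matrix (Fin n) (Fin n) R)
            - (φ (y * x) : Matrix (Fin n) (Fin n) R))
            * ((φ ((y * x)⁻¹)) : Matrix (Fin n) (Fin n) R) := by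
        have h1 : (φ (x * y * (y * x)⁻¹)) = φ (x * y) * φ ((y * x)⁻¹) := by
          rw [← _root_.map_mul]
        have h2 : (φ (y * x) : Matrix (Fin n) (Fin n) R)
            * ((φ ((y * x)⁻¹)) : Matrix (Fin n) (Fin n) R) = 1 := by
          rw [← Units.val_mul, ← _root_.map_mul, mul_inv_cancel, _root_.map_one, Units.val_one]
        rw [h1, Units.val_mul, Matrix.sub_mul, h2]
      have hentry : (φ (x * y * (y * x)⁻¹) : Matrix (Fin n) (Fin n) R) i j
          - (1 : Matrix (Fin n) (Fin n) R) i j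
          = (((φ (x * y) : Matrix (Fin n) (Fin n) R)
            - (φ (y * x) : Matrix (Fin n) (Fin n) R))
            * ((φ ((y * x)⁻¹)) : Matrix (Fin n) (Fin n) R)) i j := by
        rw [← Matrix.sub_apply, key]
      rw [hentry, Matrix.mul_apply]
      exact Ideal.sum_mem _ fun k _ => Ideal.mul_mem_right _ _ (hCDmem i k)
    -- contradiction with the centralizer condition
    have hNb_normal : Nb.Normal := MonoidHom.normal_ker _
    have : Na ≤ Subgroup.centralizer (Nb : Set Γ) := by
      intro x hx
      rw [Subgroup.mem_centralizer_iff]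
      intro y hy
      exact (hcomm x hx y hy).symm
    rw [hcent Nb hNb_normal hNbne] at this
    exact hNane (le_bot_iff.mp this)
  -- conclude: embed into the fraction field of R ⧸ I
  haveI := hprime
  haveI : IsDomain (R ⧸ I) := Ideal.Quotient.isDomain I
  refine ⟨FractionRing (R ⧸ I), inferInstance,
    (Matrix.GeneralLinearGroup.map (algebraMap (R ⧸ I) (FractionRing (R ⧸ I)))).comp
      ((Matrix.GeneralLinearGroup.map (Ideal.Quotient.mk I)).comp φ), ?_⟩
  have halg : Function.Injective (algebraMap (R ⧸ I) (FractionRing (R ⧸ I))) :=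
    IsFractionRing.injective _ _
  have hGL : Function.Injective
      (Matrix.GeneralLinearGroup.map (n := Fin n) (algebraMap (R ⧸ I) (FractionRing (R ⧸ I)))) := by
    apply Units.map_injective
    intro M N hMN
    ext i j
    have h := congrArg (fun P : Matrix (Fin n) (Fin n) (FractionRing (R ⧸ I)) => P i j) hMN
    exact halg h
  intro g h hgh
  have hq : Matrix.GeneralLinearGroup.map (Ideal.Quotient.mk I) (φ g)
      = Matrix.GeneralLinearGroup.map (Ideal.Quotient.mk I) (φ h) := hGL (by simpa using hgh)
  have h1 : Matrix.GeneralLinearGroup.map (Ideal.Quotient.mk I) (φ (g * h⁻¹)) = 1 := by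
    rw [_root_.map_mul, _root_.map_mul, map_inv, map_inv, hq, mul_inv_cancel]
  rw [hker] at h1
  have h2 := hQI _ h1
  rwa [mul_inv_eq_one] at h2
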